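/- arXiv:1303.3789 — 3 statements merged into one kernel-verified Lean document; each statement's English description precedes it below -/
import Mathlib

section
/- Let S = ⟨qm₁,…,qm_d, pn₁,…,pn_k⟩ be a gluing of S₁ and S₂. Then the following are equivalent: (1) S is symmetric and S₁ (or S₂) is symmetric; (2) both S₁ and S₂ are symmetric. -/
open scoped Pointwise

/-- `S ⊆ ℕ` is a numerical semigroup: it contains `0`, is closed under
addition, and has finite complement in `ℕ`. -/
def IsNumSgp (S : Set ℕ) : Prop :=
  (0 : ℕ) ∈ S ∧ (∀ a ∈ S, ∀ b ∈ S, a + b ∈ S) ∧ {x : ℕ | x ∉ S}.Finite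

/-- `nM S t` is the `t`-fold sumset of the maximal ideal `M = S \ {0}`,
with the convention `nM S 0 = S`. -/
def nM (S : Set ℕ) : ℕ → Set ℕ
  | 0 => S
  | t + 1 => (S \ {0}) + nM S t

/-- the order of `s` with respect to `S` : the largest `t` with `s ∈ tM`. -/
noncomputable def ordS (S : Set ℕ) (s : ℕ) : ℕ := sSup {t : ℕ | s ∈ nM S t}

/-- the multiplicity of `S` : its least nonzero element. -/
noncomputable def mult (S : Set ℕ) : ℕ := sInf {x : ℕ | x ∈ S ∧ x ≠ 0}

/-- the Apéry set of `S` with respect to `x` : elements `s ∈ S` with `s - x ∉ S`. -/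
def Ap (S : Set ℕ) (x : ℕ) : Set ℕ := {s : ℕ | s ∈ S ∧ ¬ ∃ t ∈ S, s = t + x}

/-- membership of an integer in (the image in `ℤ` of) `S`. -/
def zmem (S : Set ℕ) (z : ℤ) : Prop := ∃ t ∈ S, (t : ℤ) = z

/-- the Frobenius number of `S` : the largest integer not in `S`. -/
noncomputable def Frob (S : Set ℕ) : ℤ := sSup {z : ℤ | ¬ zmem S z}

/-- `S` is symmetric: for every integer `z`, `z ∈ S` iff `F(S) - z ∉ S`. -/
def IsSymmetric (S : Set ℕ) : Prop := ∀ z : ℤ, zmem S z ↔ ¬ zmem S (Frob S - z)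

/-- the set of maximal elements of `Ap S x` with respect to the order
`u ⪯ v` iff `v = u + z` for some `z ∈ S`. -/
def MaxAp (S : Set ℕ) (x : ℕ) : Set ℕ :=
  {w : ℕ | w ∈ Ap S x ∧ ∀ y ∈ Ap S x, (∃ z ∈ S, y = w + z) → y = w}

/-- the set of maximal elements of `Ap S x` with respect to the order
`u ⪯_M v` iff `v = u + z` for some `z ∈ S` with `ord(v) = ord(u) + ord(z)`. -/
def MaxMAp (S : Set ℕ) (x : ℕ) : Set ℕ :=
  {w : ℕ | w ∈ Ap S x ∧ ∀ y ∈ Ap S x,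
    (∃ z ∈ S, y = w + z ∧ ordS S y = ordS S w + ordS S z) → y = w}

/-- `S` is M-pure with respect to `x` : all maximal elements of `Ap S x`
under `⪯_M` have the same order. -/
def MPureWrt (S : Set ℕ) (x : ℕ) : Prop :=
  ∀ w ∈ MaxMAp S x, ∀ w' ∈ MaxMAp S x, ordS S w = ordS S w'

/-- `S` is M-pure : it is M-pure with respect to its multiplicity. -/
def MPure (S : Set ℕ) : Prop := MPureWrt S (mult S)

/-- `β_i(x)` : the number of elements of `Ap S x` of order `i`. -/
noncomputable def betaS (S : Set ℕ) (x i : ℕ) : ℕ := {w ∈ Ap S x | ordS S w = i}.ncard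

/-- `d(x)` : the maximal order of an element of `Ap S x`. -/
noncomputable def dS (S : Set ℕ) (x : ℕ) : ℕ := sSup (ordS S '' Ap S x)

/-- the reduction number of `S` : the least `r` with `(r+1)M = m(S) + rM`. -/
noncomputable def redNum (S : Set ℕ) : ℕ :=
  sInf {r : ℕ | nM S (r + 1) = (fun y => mult S + y) '' nM S r}

/-- `l_x(S) = max { ord(s+x) - ord(x) - ord(s) : s ∈ S, ord(s) ≤ r }`. -/
noncomputable def lS (S : Set ℕ) (x : ℕ) : ℕ :=
  sSup {t : ℕ | ∃ s ∈ S, ordS S s ≤ redNum S ∧ t = ordS S (s + x) - ordS S x - ordS S s}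

/-- the Hilbert function of `S`. -/
noncomputable def HilbS (S : Set ℕ) (t : ℕ) : ℕ := (nM S t \ nM S (t + 1)).ncard

/-- The data of a gluing `S = ⟨q m₁, …, q m_d, p n₁, …, p n_k⟩` of two numerical
semigroups `S₁ = ⟨m₁, …, m_d⟩` and `S₂ = ⟨n₁, …, n_k⟩`, minimally generated by
`m₁ < ⋯ < m_d` and `n₁ < ⋯ < n_k`, where `p ∈ S₁ \ {m₁, …, m_d}`,
`q ∈ S₂ \ {n₁, …, n_k}` and `gcd(p, q) = 1`. -/
structure Gluing where
  d : ℕ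
  k : ℕ
  hd : 0 < d
  hk : 0 < k
  m : Fin d → ℕ
  n : Fin k → ℕ
  p : ℕ
  q : ℕ
  hm : StrictMono m
  hn : StrictMono n
  hmin₁ : ∀ i, m i ∉ AddSubmonoid.closure (Set.range m \ {m i})
  hmin₂ : ∀ j, n j ∉ AddSubmonoid.closure (Set.range n \ {n j})
  hnum₁ : IsNumSgp (AddSubmonoid.closure (Set.range m) : Set ℕ)
  hnum₂ : IsNumSgp (AddSubmonoid.closure (Set.range n) : Set ℕ)
  hp : p ∈ AddSubmonoid.closure (Set.range m)
  hq : q ∈ AddSubmonoid.closure (Set.range n)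
  hpm : p ∉ Set.range m
  hqn : q ∉ Set.range n
  hpq : Nat.gcd p q = 1

/-- the numerical semigroup `S₁ = ⟨m₁, …, m_d⟩`. -/
def Gluing.S₁ (G : Gluing) : Set ℕ := (AddSubmonoid.closure (Set.range G.m) : Set ℕ)

/-- the numerical semigroup `S₂ = ⟨n₁, …, n_k⟩`. -/
def Gluing.S₂ (G : Gluing) : Set ℕ := (AddSubmonoid.closure (Set.range G.n) : Set ℕ)

/-- the glued numerical semigroup `S = ⟨q m₁, …, q m_d, p n₁, …, p n_k⟩`. -/
def Gluing.S (G : Gluing) : Set ℕ :=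
  (AddSubmonoid.closure
    ((fun x => G.q * x) '' Set.range G.m ∪ (fun x => G.p * x) '' Set.range G.n) : Set ℕ)

/-- the smallest generator `m₁` of `S₁`. -/
def Gluing.m₁ (G : Gluing) : ℕ := G.m ⟨0, G.hd⟩

/-- the smallest generator `n₁` of `S₂`. -/
def Gluing.n₁ (G : Gluing) : ℕ := G.n ⟨0, G.hk⟩

/-- the gluing is specific if `ord_{S₂}(q) + l_q(S₂) ≤ ord_{S₁}(p)`. -/
def Gluing.Specific (G : Gluing) : Prop := ordS G.S₂ G.q + lS G.S₂ G.q ≤ ordS G.S₁ G.p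

/-- the gluing is nice if `q = a n₁` for some `1 < a ≤ ord_{S₁}(p)`. -/
def Gluing.Nice (G : Gluing) : Prop := ∃ a : ℕ, 1 < a ∧ a ≤ ordS G.S₁ G.p ∧ G.q = a * G.n₁

section StmtTen

/-! ### Generic lemmas about `zmem` and `Frob` -/

lemma zmem_natCast {U : Set ℕ} {n : ℕ} (hn : n ∈ U) : zmem U (n : ℤ) := ⟨n, hn, rfl⟩

lemma zmem_nonneg {U : Set ℕ} {z : ℤ} (h : zmem U z) : 0 ≤ z := by
  obtain ⟨t, _, ht⟩ := h; exact ht ▸ Int.natCast_nonneg t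

lemma zmem_add {U : Set ℕ} (hU : ∀ a ∈ U, ∀ b ∈ U, a + b ∈ U) {x y : ℤ}
    (hx : zmem U x) (hy : zmem U y) : zmem U (x + y) := by
  obtain ⟨a, ha, rfl⟩ := hx
  obtain ⟨b, hb, rfl⟩ := hy
  exact ⟨a + b, hU a ha b hb, by push_cast; ring⟩

lemma zmem_mul_natCast {U : Set ℕ} (hU : ∀ a ∈ U, ∀ b ∈ U, a + b ∈ U) (h0 : 0 ∈ U)
    {c : ℕ} (hc : c ∈ U) (k : ℕ) : zmem U ((k : ℤ) * (c : ℤ)) := by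
  induction k with
  | zero => simpa using zmem_natCast h0
  | succ n ih =>
      have he : (((n + 1 : ℕ) : ℤ)) * (c : ℤ) = (n : ℤ) * c + c := by push_cast; ring
      rw [he]
      exact zmem_add hU ih (zmem_natCast hc)

lemma frob_isGreatest {U : Set ℕ} {B : ℤ} (hB : ∀ z : ℤ, B < z → zmem U z) :
    IsGreatest {z : ℤ | ¬ zmem U z} (Frob U) := by
  have hne : (-1 : ℤ) ∈ {z : ℤ | ¬ zmem U z} := fun h => by
    have := zmem_nonneg h; omega
  have hbdd' : ∀ z ∈ {z : ℤ | ¬ zmem U z}, z ≤ B := by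
    intro z hz
    by_contra h
    exact hz (hB z (by omega))
  obtain ⟨lub, hmem, hub⟩ := Int.exists_greatest_of_bdd ⟨B, hbdd'⟩ ⟨-1, hne⟩
  have hgr : IsGreatest {z : ℤ | ¬ zmem U z} lub := ⟨hmem, hub⟩
  have : Frob U = lub := hgr.csSup_eq
  rw [this]; exact hgr

/-! ### The abstract gluing situation -/

structure GP (T₁ T₂ S : Set ℕ) (p q : ℕ) : Prop where
  zero₁ : 0 ∈ T₁
  zero₂ : 0 ∈ T₂
  add₁ : ∀ a ∈ T₁, ∀ b ∈ T₁, a + b ∈ T₁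
  add₂ : ∀ a ∈ T₂, ∀ b ∈ T₂, a + b ∈ T₂
  memp : p ∈ T₁
  memq : q ∈ T₂
  ppos : 0 < p
  qpos : 0 < q
  cop : IsCoprime (p : ℤ) (q : ℤ)
  bdd₁ : ∀ z : ℤ, Frob T₁ < z → zmem T₁ z
  bdd₂ : ∀ z : ℤ, Frob T₂ < z → zmem T₂ z
  notmem₁ : ¬ zmem T₁ (Frob T₁)
  notmem₂ : ¬ zmem T₂ (Frob T₂)
  hS : ∀ z : ℤ, zmem S z ↔ ∃ a b : ℤ, zmem T₁ a ∧ zmem T₂ b ∧ z = q * a + p * b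

namespace GP

variable {T₁ T₂ S : Set ℕ} {p q : ℕ} (gp : GP T₁ T₂ S p q)
include gp

lemma symm : GP T₂ T₁ S q p where
  zero₁ := gp.zero₂
  zero₂ := gp.zero₁
  add₁ := gp.add₂
  add₂ := gp.add₁
  memp := gp.memq
  memq := gp.memp
  ppos := gp.qpos
  qpos := gp.ppos
  cop := gp.cop.symm
  bdd₁ := gp.bdd₂
  bdd₂ := gp.bdd₁
  notmem₁ := gp.notmem₂
  notmem₂ := gp.notmem₁
  hS := by
    intro z
    rw [gp.hS z]
    constructor
    · rintro ⟨a, b, h1, h2, he⟩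
      exact ⟨b, a, h2, h1, by linarith⟩
    · rintro ⟨b, a, h2, h1, he⟩
      exact ⟨a, b, h1, h2, by linarith⟩

lemma rep (a b : ℤ) :
    zmem S ((q : ℤ) * a + (p : ℤ) * b) ↔
      ∃ t : ℤ, zmem T₁ (a - p * t) ∧ zmem T₂ (b + q * t) := by
  constructor
  · intro h
    obtain ⟨a', b', h1, h2, heq⟩ := (gp.hS _).mp h
    have hq0 : (q : ℤ) ≠ 0 := by exact_mod_cast gp.qpos.ne'
    have hdvd : (q : ℤ) ∣ (b' - b) := by
      refine gp.cop.symm.dvd_of_dvd_mul_left ⟨a - a', ?_⟩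
      linarith
    obtain ⟨t, ht⟩ := hdvd
    have hb' : b' = b + q * t := by linarith
    have ha' : a' = a - p * t := by
      have h3 : (q : ℤ) * a' = q * (a - p * t) := by
        rw [hb'] at heq; linarith [heq]
      exact mul_left_cancel₀ hq0 h3
    exact ⟨t, ha' ▸ h1, hb' ▸ h2⟩
  · rintro ⟨t, h1, h2⟩
    exact (gp.hS _).mpr ⟨a - p * t, b + q * t, h1, h2, by ring⟩

lemma mono₁ {a t t' : ℤ} (h : zmem T₁ (a - p * t)) (ht : t' ≤ t) :
    zmem T₁ (a - p * t') := by
  have hz := zmem_mul_natCast gp.add₁ gp.zero₁ gp.memp (t - t').toNat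
  rw [Int.toNat_of_nonneg (by omega)] at hz
  have he : a - p * t' = (a - p * t) + (t - t') * p := by ring
  rw [he]
  exact zmem_add gp.add₁ h hz

lemma mono₂ {b t t' : ℤ} (h : zmem T₂ (b + q * t)) (ht : t ≤ t') :
    zmem T₂ (b + q * t') := by
  have hz := zmem_mul_natCast gp.add₂ gp.zero₂ gp.memq (t' - t).toNat
  rw [Int.toNat_of_nonneg (by omega)] at hz
  have he : b + q * t' = (b + q * t) + (t' - t) * q := by ring
  rw [he]
  exact zmem_add gp.add₂ h hz

lemma not_zmem₁_frob_sub {t : ℤ} (ht : 1 ≤ t) :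
    ¬ zmem T₁ (Frob T₁ + p - p * t) := by
  intro h
  have : zmem T₁ (Frob T₁ + p - p * 1) := gp.mono₁ h ht
  apply gp.notmem₁
  have he : Frob T₁ + (p : ℤ) - p * 1 = Frob T₁ := by ring
  rwa [he] at this

lemma frob_notmem_S : ¬ zmem S ((q : ℤ) * Frob T₁ + p * Frob T₂ + p * q) := by
  have he : (q : ℤ) * Frob T₁ + p * Frob T₂ + p * q
      = (q : ℤ) * (Frob T₁ + p) + (p : ℤ) * Frob T₂ := by ring
  rw [he, gp.rep]
  rintro ⟨t, h1, h2⟩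
  rcases le_or_gt t 0 with ht | ht
  · exact gp.notmem₂ (by simpa using gp.mono₂ h2 ht)
  · exact gp.not_zmem₁_frob_sub ht h1

lemma window (z : ℤ) :
    ∃ b : ℤ, Frob T₂ < b ∧ b ≤ Frob T₂ + q ∧ (q : ℤ) ∣ (z - p * b) := by
  obtain ⟨u, v, huv⟩ := gp.cop
  have hq0 : (0 : ℤ) < (q : ℤ) := by exact_mod_cast gp.qpos
  set x : ℤ := u * z - (Frob T₂ + 1) with hx
  set r : ℤ := x % q with hr
  have hr0 : 0 ≤ r := Int.emod_nonneg x hq0.ne'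
  have hrq : r < q := Int.emod_lt_of_pos x hq0
  refine ⟨Frob T₂ + 1 + r, by omega, by omega, ?_⟩
  have hd1 : (q : ℤ) ∣ (z - p * (u * z)) := ⟨v * z, by linear_combination (-z) * huv⟩
  have hd2 : (q : ℤ) ∣ (u * z - (Frob T₂ + 1 + r)) := by
    have : x - r = q * (x / q) := by
      rw [hr, Int.emod_def]; ring
    exact ⟨x / q, by linarith [this]⟩
  have he : z - p * (Frob T₂ + 1 + r)
      = (z - p * (u * z)) + p * (u * z - (Frob T₂ + 1 + r)) := by ring
  rw [he]
  exact dvd_add hd1 (Dvd.dvd.mul_left hd2 _)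

lemma mem_of_gt {z : ℤ} (hz : (q : ℤ) * Frob T₁ + p * Frob T₂ + p * q < z) :
    zmem S z := by
  obtain ⟨b, hb1, hb2, hdvd⟩ := gp.window z
  have hq0 : (0 : ℤ) < (q : ℤ) := by exact_mod_cast gp.qpos
  have hp0 : (0 : ℤ) ≤ (p : ℤ) := Int.natCast_nonneg p
  set a : ℤ := (z - p * b) / q with ha
  have hqa : (q : ℤ) * a = z - p * b := Int.mul_ediv_cancel' hdvd
  have hpb : (p : ℤ) * b ≤ p * (Frob T₂ + q) := by
    exact mul_le_mul_of_nonneg_left hb2 hp0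
  have haF : Frob T₁ < a := by
    have h1 : (q : ℤ) * Frob T₁ < q * a := by
      rw [hqa]; push_cast at hpb ⊢; nlinarith
    exact lt_of_mul_lt_mul_left h1 hq0.le
  refine (gp.hS z).mpr ⟨a, b, gp.bdd₁ a haF, gp.bdd₂ b hb1, by linarith [hqa]⟩

lemma frobS : Frob S = (q : ℤ) * Frob T₁ + p * Frob T₂ + p * q := by
  have hgr : IsGreatest {z : ℤ | ¬ zmem S z}
      ((q : ℤ) * Frob T₁ + p * Frob T₂ + p * q) := by
    constructor
    · exact gp.frob_notmem_S
    · intro z hz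
      by_contra h
      exact hz (gp.mem_of_gt (by omega))
  exact hgr.csSup_eq

lemma eval₁ (w : ℤ) :
    zmem S ((q : ℤ) * (Frob T₁ + p) + (p : ℤ) * w) ↔ zmem T₂ w := by
  rw [gp.rep]
  constructor
  · rintro ⟨t, h1, h2⟩
    rcases le_or_gt t 0 with ht | ht
    · simpa using gp.mono₂ h2 ht
    · exact absurd h1 (gp.not_zmem₁_frob_sub ht)
  · intro h
    refine ⟨0, ?_, by simpa using h⟩
    have : zmem T₁ (Frob T₁ + p) := gp.bdd₁ _ (by
      have : (0 : ℤ) < (p : ℤ) := by exact_mod_cast gp.ppos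
      omega)
    simpa using this
  
lemma eval₂ (w : ℤ) : zmem S ((p : ℤ) * w) ↔ zmem T₂ w := by
  have he : (p : ℤ) * w = (q : ℤ) * 0 + (p : ℤ) * w := by ring
  rw [he, gp.rep]
  constructor
  · rintro ⟨t, h1, h2⟩
    have hp0 : (0 : ℤ) < (p : ℤ) := by exact_mod_cast gp.ppos
    have h1' := zmem_nonneg h1
    have ht : t ≤ 0 := by nlinarith
    simpa using gp.mono₂ h2 ht
  · intro h
    refine ⟨0, by simpa using zmem_natCast gp.zero₁, by simpa using h⟩

lemma sym_of_symS (hs : IsSymmetric S) : IsSymmetric T₂ := by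
  intro w
  have h2 := hs ((q : ℤ) * (Frob T₁ + p) + (p : ℤ) * w)
  rw [gp.frobS] at h2
  have he : (q : ℤ) * Frob T₁ + p * Frob T₂ + p * q
      - ((q : ℤ) * (Frob T₁ + p) + (p : ℤ) * w) = (p : ℤ) * (Frob T₂ - w) := by ring
  rw [he, gp.eval₁, gp.eval₂] at h2
  exact h2

lemma symS (hsym₁ : IsSymmetric T₁) (hsym₂ : IsSymmetric T₂) : IsSymmetric S := by
  intro z
  rw [gp.frobS]
  obtain ⟨u, v, huv⟩ := gp.cop
  set a : ℤ := v * z with hadef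
  set b : ℤ := u * z with hbdef
  have hz : z = (q : ℤ) * a + (p : ℤ) * b := by
    rw [hadef, hbdef]; linear_combination (-z) * huv
  have hL : zmem S z ↔ ∃ t : ℤ, zmem T₁ (a - p * t) ∧ zmem T₂ (b + q * t) := by
    rw [hz]; exact gp.rep a b
  have heR : (q : ℤ) * Frob T₁ + p * Frob T₂ + p * q - z
      = (q : ℤ) * (Frob T₁ + p - a) + (p : ℤ) * (Frob T₂ - b) := by
    rw [hz]; ring
  have hR : zmem S ((q : ℤ) * Frob T₁ + p * Frob T₂ + p * q - z) ↔
      ∃ t : ℤ, ¬ zmem T₁ (a - p * (t + 1)) ∧ ¬ zmem T₂ (b + q * t) := by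
    rw [heR, gp.rep]
    constructor
    · rintro ⟨s, h1, h2⟩
      refine ⟨-s, ?_, ?_⟩
      · intro hcon
        have := (hsym₁ (a - p * (-s + 1))).mp hcon
        apply this
        have he1 : Frob T₁ - (a - p * (-s + 1)) = Frob T₁ + p - a - p * s := by ring
        rw [he1]; exact h1
      · intro hcon
        have := (hsym₂ (b + q * (-s))).mp hcon
        apply this
        have he2 : Frob T₂ - (b + q * (-s)) = Frob T₂ - b + q * s := by ring
        rw [he2]; exact h2
    · rintro ⟨t, h1, h2⟩
      refine ⟨-t, ?_, ?_⟩
      · have := (hsym₁ (a - p * (t + 1))).not.mp (by simpa using h1)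
        rw [not_not] at this
        have he1 : Frob T₁ - (a - p * (t + 1)) = Frob T₁ + p - a - p * (-t) := by ring
        rwa [he1] at this
      · have := (hsym₂ (b + q * t)).not.mp (by simpa using h2)
        rw [not_not] at this
        have he2 : Frob T₂ - (b + q * t) = Frob T₂ - b + q * (-t) := by ring
        rwa [he2] at this
  rw [hL, hR]
  have hq1 : (1 : ℤ) ≤ (q : ℤ) := by exact_mod_cast gp.qpos
  -- existence of t with Q t and with ¬ Q t
  have hQtop : ∃ t : ℤ, zmem T₂ (b + q * t) := by
    refine ⟨|Frob T₂ - b| + 1, gp.bdd₂ _ ?_⟩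
    have h1 : Frob T₂ - b ≤ |Frob T₂ - b| := le_abs_self _
    have h2 : (0 : ℤ) ≤ |Frob T₂ - b| := abs_nonneg _
    nlinarith
  have hQbot : ∃ t : ℤ, ¬ zmem T₂ (b + q * t) := by
    refine ⟨-(|b| + 1), fun h => ?_⟩
    have h0 := zmem_nonneg h
    have h1 : b ≤ |b| := le_abs_self b
    have h2 : (0 : ℤ) ≤ |b| := abs_nonneg b
    nlinarith
  constructor
  · rintro ⟨t₀, hp0, hq0⟩ ⟨t, h1, h2⟩
    rcases le_or_gt (t + 1) t₀ with ht | ht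
    · exact h1 (gp.mono₁ hp0 ht)
    · exact h2 (gp.mono₂ hq0 (by omega))
  · intro hno
    obtain ⟨T, hQT, hleast⟩ := Int.exists_least_of_bdd
      (P := fun t => zmem T₂ (b + q * t))
      ⟨-(|b| + 1), fun t ht => by
        by_contra hc
        push_neg at hc
        have h0 := zmem_nonneg ht
        have h1 : b ≤ |b| := le_abs_self b
        have habs : (0 : ℤ) ≤ |b| := abs_nonneg b
        have h3 : (q : ℤ) * t ≤ t := by
          nlinarith [mul_nonneg (by linarith : (0:ℤ) ≤ (q:ℤ) - 1) (by linarith : (0:ℤ) ≤ -t)]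
        linarith⟩ hQtop
    refine ⟨T, ?_, hQT⟩
    by_contra hPT
    apply hno
    refine ⟨T - 1, ?_, fun hc => ?_⟩
    · have he : a - (p : ℤ) * (T - 1 + 1) = a - p * T := by ring
      rw [he]; exact hPT
    · have := hleast _ hc
      omega
  
end GP

/-! ### Instantiating the abstract situation with a gluing -/

lemma one_mem_closure_nat {s : Set ℕ} (h : (1 : ℕ) ∈ AddSubmonoid.closure s) :
    (1 : ℕ) ∈ s := by
  refine AddSubmonoid.closure_induction (motive := fun x _ => x = 1 → 1 ∈ s)
    (fun x hx hx1 => hx1 ▸ hx) (fun h1 => by omega) ?_ h rfl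
  intro x y hx hy ihx ihy hxy
  have hcases : (x = 1 ∧ y = 0) ∨ (x = 0 ∧ y = 1) := by omega
  rcases hcases with ⟨hx1, _⟩ | ⟨_, hy1⟩
  · exact ihx hx1
  · exact ihy hy1

lemma Gluing.mem_S_iff (G : Gluing) (x : ℕ) :
    x ∈ G.S ↔ ∃ a ∈ G.S₁, ∃ b ∈ G.S₂, x = G.q * a + G.p * b := by
  have hA : AddSubmonoid.closure ((fun x => G.q * x) '' Set.range G.m)
      = AddSubmonoid.map (AddMonoidHom.mulLeft G.q)
          (AddSubmonoid.closure (Set.range G.m)) := by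
    rw [AddMonoidHom.map_mclosure]
    rfl
  have hB : AddSubmonoid.closure ((fun x => G.p * x) '' Set.range G.n)
      = AddSubmonoid.map (AddMonoidHom.mulLeft G.p)
          (AddSubmonoid.closure (Set.range G.n)) := by
    rw [AddMonoidHom.map_mclosure]
    rfl
  have hmem : x ∈ G.S ↔ x ∈ AddSubmonoid.map (AddMonoidHom.mulLeft G.q)
          (AddSubmonoid.closure (Set.range G.m)) ⊔ AddSubmonoid.map (AddMonoidHom.mulLeft G.p)
          (AddSubmonoid.closure (Set.range G.n)) := by
    rw [Gluing.S]
    rw [show (AddSubmonoid.closure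
        ((fun x => G.q * x) '' Set.range G.m ∪ (fun x => G.p * x) '' Set.range G.n))
        = _ ⊔ _ from (AddSubmonoid.closure_union _ _), hA, hB]
    rfl
  rw [hmem, AddSubmonoid.mem_sup]
  constructor
  · rintro ⟨y, hy, z, hz, hyz⟩
    rw [AddSubmonoid.mem_map] at hy hz
    obtain ⟨a, ha, hay⟩ := hy
    obtain ⟨b, hb, hbz⟩ := hz
    exact ⟨a, ha, b, hb, by rw [← hyz, ← hay, ← hbz]; rfl⟩
  · rintro ⟨a, ha, b, hb, rfl⟩
    refine ⟨G.q * a, AddSubmonoid.mem_map.mpr ⟨a, ha, rfl⟩,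
      G.p * b, AddSubmonoid.mem_map.mpr ⟨b, hb, rfl⟩, rfl⟩

lemma Gluing.q_pos (G : Gluing) : 0 < G.q := by
  rcases Nat.eq_zero_or_pos G.q with h | h
  · exfalso
    have hp1 : G.p = 1 := by
      have := G.hpq
      rw [h, Nat.gcd_zero_right] at this
      exact this
    exact G.hpm (hp1 ▸ one_mem_closure_nat (hp1 ▸ G.hp))
  · exact h

lemma Gluing.p_pos (G : Gluing) : 0 < G.p := by
  rcases Nat.eq_zero_or_pos G.p with h | h
  · exfalso
    have hq1 : G.q = 1 := by
      have := G.hpq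
      rw [h, Nat.gcd_zero_left] at this
      exact this
    exact G.hqn (hq1 ▸ one_mem_closure_nat (hq1 ▸ G.hq))
  · exact h

lemma bdd_of_finite {U : Set ℕ} (hfin : {x : ℕ | x ∉ U}.Finite) :
    ∃ B : ℤ, ∀ z : ℤ, B < z → zmem U z := by
  obtain ⟨B, hB⟩ := hfin.bddAbove
  refine ⟨(B : ℤ), fun z hz => ?_⟩
  have hz0 : 0 ≤ z := le_trans (Int.natCast_nonneg B) hz.le
  obtain ⟨n, rfl⟩ := Int.eq_ofNat_of_zero_le hz0
  have hn : n ∈ U := by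
    by_contra hmem
    have := hB hmem
    exact absurd hz (by exact_mod_cast not_lt.mpr this)
  exact zmem_natCast hn

lemma Gluing.gp (G : Gluing) : GP G.S₁ G.S₂ G.S G.p G.q := by
  have hbdd₁ : ∃ B : ℤ, ∀ z : ℤ, B < z → zmem G.S₁ z := bdd_of_finite G.hnum₁.2.2
  have hbdd₂ : ∃ B : ℤ, ∀ z : ℤ, B < z → zmem G.S₂ z := bdd_of_finite G.hnum₂.2.2
  obtain ⟨B₁, hB₁⟩ := hbdd₁
  obtain ⟨B₂, hB₂⟩ := hbdd₂
  have hgr₁ := frob_isGreatest hB₁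
  have hgr₂ := frob_isGreatest hB₂
  refine ⟨?_, ?_, ?_, ?_, G.hp, G.hq, G.p_pos, G.q_pos,
    Nat.isCoprime_iff_coprime.mpr G.hpq, ?_, ?_, hgr₁.1, hgr₂.1, ?_⟩
  · exact AddSubmonoid.zero_mem _
  · exact AddSubmonoid.zero_mem _
  · exact fun a ha b hb => AddSubmonoid.add_mem _ ha hb
  · exact fun a ha b hb => AddSubmonoid.add_mem _ ha hb
  · intro z hz
    by_contra h
    exact absurd (hgr₁.2 h) (not_le.mpr hz)
  · intro z hz
    by_contra h
    exact absurd (hgr₂.2 h) (not_le.mpr hz)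
  · intro z
    constructor
    · rintro ⟨x, hx, rfl⟩
      obtain ⟨a, ha, b, hb, rfl⟩ := (G.mem_S_iff x).mp hx
      exact ⟨(a : ℤ), (b : ℤ), zmem_natCast ha, zmem_natCast hb, by push_cast; ring⟩
    · rintro ⟨a, b, ⟨a', ha', rfl⟩, ⟨b', hb', rfl⟩, rfl⟩
      refine ⟨G.q * a' + G.p * b', (G.mem_S_iff _).mpr ⟨a', ha', b', hb', rfl⟩, by push_cast; ring⟩

/-- for a gluing `S` of `S₁` and `S₂`, the following are equivalent:
(1) `S` is symmetric and `S₁` (or `S₂`) is symmetric;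
(2) both `S₁` and `S₂` are symmetric. -/
theorem stmt10 (G : Gluing) :
    (IsSymmetric G.S ∧ (IsSymmetric G.S₁ ∨ IsSymmetric G.S₂)) ↔
      (IsSymmetric G.S₁ ∧ IsSymmetric G.S₂) := by
  have gp := G.gp
  constructor
  · rintro ⟨hS, -⟩
    exact ⟨gp.symm.sym_of_symS hS, gp.sym_of_symS hS⟩
  · rintro ⟨h1, h2⟩
    exact ⟨gp.symS h1 h2, Or.inl h1⟩

end StmtTen
end

section
/- Let S = ⟨qm₁,…,qm_d, pn₁,…,pn_k⟩ be a specific gluing of S₁ and S₂. Then every u∈S can be written as u = qz₁ + pz₂ with z₁∈S₁ and z₂∈AP(S₂,q); moreover this representation is unique (if u = qs₁ + ps₂ with s₁∈S₁ and s₂∈AP(S₂,q), then s₁ = z₁ and s₂ = z₂) and it satisfies ord_S(u) = ord_{S₁}(z₁) + ord_{S₂}(z₂). -/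
open scoped Pointwise

def AddClosed (S : Set ℕ) : Prop := 0 ∈ S ∧ ∀ a ∈ S, ∀ b ∈ S, a + b ∈ S

namespace NumAux

variable {S : Set ℕ}

lemma nM_succ (S : Set ℕ) (t : ℕ) : nM S (t + 1) = (S \ {0}) + nM S t := rfl

lemma nM_subset (h : AddClosed S) : ∀ t, nM S t ⊆ S
  | 0 => subset_rfl
  | t + 1 => by
    rintro s hs
    obtain ⟨a, ha, b, hb, rfl⟩ := Set.mem_add.mp hs
    exact h.2 a ha.1 b (nM_subset h t hb)

lemma add_mem_nM (h : AddClosed S) {a b t} (ha : a ∈ S) (hb : b ∈ nM S t) :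
    a + b ∈ nM S t := by
  induction t generalizing b with
  | zero => exact h.2 a ha b hb
  | succ t ih =>
    obtain ⟨m, hm, c, hc, rfl⟩ := Set.mem_add.mp hb
    have : a + (m + c) = m + (a + c) := by ring
    rw [this]
    exact Set.add_mem_add hm (ih hc)

lemma nM_add_mem (h : AddClosed S) {a b t u} (ha : a ∈ nM S t) (hb : b ∈ nM S u) :
    a + b ∈ nM S (t + u) := by
  induction t generalizing a with
  | zero => simpa using add_mem_nM h ha hb
  | succ t ih =>
    obtain ⟨m, hm, c, hc, rfl⟩ := Set.mem_add.mp ha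
    have : m + c + b = m + (c + b) := by ring
    rw [this, show t + 1 + u = (t + u) + 1 by ring]
    exact Set.add_mem_add hm (ih hc)

lemma nM_anti (h : AddClosed S) {t u} (htu : t ≤ u) : nM S u ⊆ nM S t := by
  induction u with
  | zero => simpa [Nat.le_zero.mp htu] using subset_rfl
  | succ u ih =>
    rcases Nat.lt_or_ge t (u+1) with hlt | hge
    · intro s hs
      obtain ⟨m, hm, c, hc, rfl⟩ := Set.mem_add.mp hs
      exact add_mem_nM h hm.1 (ih (Nat.lt_succ_iff.mp hlt) hc)
    · have : t = u + 1 := le_antisymm htu hge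
      simpa [this] using subset_rfl

lemma le_of_mem_nM {s t : ℕ} (hs : s ∈ nM S t) : t ≤ s := by
  induction t generalizing s with
  | zero => exact Nat.zero_le s
  | succ t ih =>
    obtain ⟨m, hm, c, hc, rfl⟩ := Set.mem_add.mp hs
    have h1 : 1 ≤ m := Nat.one_le_iff_ne_zero.mpr (by simpa using hm.2)
    have := Nat.add_le_add h1 (ih hc)
    omega

lemma mul_le_of_mem_nM {e s t : ℕ} (he : ∀ a ∈ S, a ≠ 0 → e ≤ a) (hs : s ∈ nM S t) :
    t * e ≤ s := by
  induction t generalizing s with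
  | zero => simp
  | succ t ih =>
    obtain ⟨m, hm, c, hc, rfl⟩ := Set.mem_add.mp hs
    have h1 : e ≤ m := he m hm.1 (by simpa using hm.2)
    calc (t+1) * e = e + t * e := by ring
    _ ≤ m + c := Nat.add_le_add h1 (ih hc)

lemma bddAbove_ord_set (s : ℕ) : BddAbove {t : ℕ | s ∈ nM S t} :=
  ⟨s, fun _ ht => le_of_mem_nM ht⟩

lemma mem_nM_ordS {s : ℕ} (hs : s ∈ S) : s ∈ nM S (ordS S s) := by
  have hne : {t : ℕ | s ∈ nM S t}.Nonempty := ⟨0, by simpa [nM] using hs⟩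
  exact Nat.sSup_mem hne (bddAbove_ord_set s)

lemma le_ordS {s t : ℕ} (hs : s ∈ nM S t) : t ≤ ordS S s :=
  le_csSup (bddAbove_ord_set s) hs

lemma ordS_superadd (h : AddClosed S) {a b : ℕ} (ha : a ∈ S) (hb : b ∈ S) :
    ordS S a + ordS S b ≤ ordS S (a + b) :=
  le_ordS (nM_add_mem h (mem_nM_ordS ha) (mem_nM_ordS hb))

lemma one_le_ordS (h : AddClosed S) {a : ℕ} (ha : a ∈ S) (ha0 : a ≠ 0) : 1 ≤ ordS S a := by
  apply le_ordS (t := 1)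
  rw [nM_succ]
  have : a + 0 ∈ (S \ {0}) + nM S 0 := Set.add_mem_add ⟨ha, by simpa using ha0⟩ h.1
  simpa using this

end NumAux

namespace NumAux

/-- a conductor for `S`. -/
noncomputable def condC (S : Set ℕ) : ℕ := sInf {c : ℕ | 1 ≤ c ∧ ∀ x, c ≤ x → x ∈ S}

variable {S : Set ℕ}

lemma condC_spec (hfin : {x : ℕ | x ∉ S}.Finite) :
    1 ≤ condC S ∧ ∀ x, condC S ≤ x → x ∈ S := by
  have hne : {c : ℕ | 1 ≤ c ∧ ∀ x, c ≤ x → x ∈ S}.Nonempty := by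
    obtain ⟨B, hB⟩ := hfin.bddAbove
    refine ⟨B + 1, by omega, fun x hx => ?_⟩
    by_contra hxS
    exact absurd (hB hxS) (by omega)
  exact Nat.sInf_mem hne

lemma mult_spec (hfin : {x : ℕ | x ∉ S}.Finite) : mult S ∈ S ∧ mult S ≠ 0 := by
  have h := condC_spec hfin
  have hne : {x : ℕ | x ∈ S ∧ x ≠ 0}.Nonempty := ⟨condC S, h.2 _ le_rfl, by omega⟩
  exact Nat.sInf_mem hne

lemma mult_le {a : ℕ} (ha : a ∈ S) (ha0 : a ≠ 0) : mult S ≤ a := Nat.sInf_le ⟨ha, ha0⟩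

lemma one_le_mult (hfin : {x : ℕ | x ∉ S}.Finite) : 1 ≤ mult S :=
  Nat.one_le_iff_ne_zero.mpr (mult_spec hfin).2

lemma ordS_mul_mult_le {s : ℕ} (hs : s ∈ S) : ordS S s * mult S ≤ s :=
  mul_le_of_mem_nM (fun _ ha ha0 => mult_le ha ha0) (mem_nM_ordS hs)

lemma ordS_le_self {s : ℕ} (hs : s ∈ S) : ordS S s ≤ s := le_of_mem_nM (mem_nM_ordS hs)

section Conductor

variable (hcl : AddClosed S) (hfin : {x : ℕ | x ∉ S}.Finite)
include hcl hfin

lemma mem_nM_of_conductor : ∀ k s : ℕ, condC S + k * mult S ≤ s → s ∈ nM S k := by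
  intro k
  induction k with
  | zero =>
    intro s hs
    exact (condC_spec hfin).2 s (by omega)
  | succ k ih =>
    intro s hs
    have hmul : (k + 1) * mult S = k * mult S + mult S := by ring
    have he := mult_spec hfin
    have he1 : 1 ≤ mult S := one_le_mult hfin
    have h1 : s - mult S ∈ nM S k := ih _ (by omega)
    have : s = mult S + (s - mult S) := by omega
    rw [this, nM_succ]
    exact Set.add_mem_add ⟨he.1, by simpa using he.2⟩ h1

lemma conductor_le_ordS {k s : ℕ} (h : condC S + k * mult S ≤ s) : k ≤ ordS S s :=
  le_ordS (mem_nM_of_conductor hcl hfin k s h)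

lemma lt_of_ordS_le {R s : ℕ} (hs : s ∈ S) (h : ordS S s ≤ R) :
    s < condC S + (R + 1) * mult S := by
  by_contra hc
  have hmul : (R + 1) * mult S = R * mult S + mult S := by ring
  have h2 : R + 1 ≤ ordS S s := conductor_le_ordS hcl hfin (by omega)
  omega

lemma ordS_add_mult {x : ℕ} (hx : x ∈ S) : ordS S x + 1 ≤ ordS S (x + mult S) := by
  have he := mult_spec hfin
  apply le_ordS
  have : x + mult S = mult S + x := by ring
  rw [this, nM_succ]
  exact Set.add_mem_add ⟨he.1, by simpa using he.2⟩ (mem_nM_ordS hx)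

/-- eventual exact growth of `ord` along an `e`-chain. -/
lemma exists_stab (s₀ : ℕ) (hs₀ : condC S ≤ s₀) :
    ∃ K, ∀ k, K ≤ k →
      ordS S (s₀ + (k + 1) * mult S) = ordS S (s₀ + k * mult S) + 1 := by
  have he1 : 1 ≤ mult S := one_le_mult hfin
  set g : ℕ → ℕ := fun k => ordS S (s₀ + k * mult S) with hg
  have hstep : ∀ k, g k + 1 ≤ g (k + 1) := by
    intro k
    have h' : s₀ + (k + 1) * mult S = (s₀ + k * mult S) + mult S := by ring
    simp only [hg, h']
    exact ordS_add_mult hcl hfin ((condC_spec hfin).2 _ (by omega))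
  have hlow : ∀ k, k ≤ g k := fun k =>
    conductor_le_ordS hcl hfin (by omega)
  have hup : ∀ k, g k - k ≤ s₀ := by
    intro k
    have h1 : g k * mult S ≤ s₀ + k * mult S :=
      ordS_mul_mult_le ((condC_spec hfin).2 _ (by omega))
    have h2 : (g k - k) * mult S ≤ s₀ := by
      have h3 : (g k - k) * mult S = g k * mult S - k * mult S := Nat.sub_mul _ _ _
      omega
    calc g k - k ≤ (g k - k) * mult S := Nat.le_mul_of_pos_right _ (by omega)
    _ ≤ s₀ := h2
  set h : ℕ → ℕ := fun k => g k - k with hh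
  have hmono : Monotone h := monotone_nat_of_le_succ (by
    intro k
    have h1 := hstep k
    have h2 := hlow k
    simp only [hh]
    omega)
  have hrange : BddAbove (Set.range h) := ⟨s₀, by rintro _ ⟨k, rfl⟩; exact hup k⟩
  obtain ⟨K, hK⟩ := Nat.sSup_mem (Set.range_nonempty h) hrange
  refine ⟨K, fun k hk => ?_⟩
  have h1 : h k ≤ sSup (Set.range h) := le_csSup hrange ⟨k, rfl⟩
  have h3 : h (k + 1) ≤ sSup (Set.range h) := le_csSup hrange ⟨k + 1, rfl⟩
  have h2 : sSup (Set.range h) ≤ h k := hK ▸ hmono hk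
  have h4 : sSup (Set.range h) ≤ h (k + 1) := hK ▸ hmono (show K ≤ k + 1 by omega)
  have e1 := hstep k
  have e2 := hlow k
  have e3 := hlow (k + 1)
  simp only [hh] at h1 h2 h3 h4
  show g (k + 1) = g k + 1
  omega

lemma exists_red : ∃ N : ℕ, nM S (N + 1) = (fun y => mult S + y) '' nM S N := by
  have he1 : 1 ≤ mult S := one_le_mult hfin
  have hC := condC_spec hfin
  have hstab : ∀ ρ : Fin (mult S), ∃ K, ∀ k, K ≤ k →
      ordS S (condC S + ρ.val + (k + 1) * mult S) =
        ordS S (condC S + ρ.val + k * mult S) + 1 :=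
    fun ρ => exists_stab hcl hfin (condC S + ρ.val) (by omega)
  choose Kf hKf using hstab
  haveI : NeZero (mult S) := ⟨by omega⟩
  set F : Fin (mult S) → ℕ := fun ρ => ordS S (condC S + ρ.val + Kf ρ * mult S) with hF
  set N : ℕ := condC S + mult S + Finset.univ.sup F with hN
  refine ⟨N, Set.Subset.antisymm ?_ ?_⟩
  · intro s hs
    have hords : N + 1 ≤ ordS S s := le_ordS hs
    have hbig : (N + 1) * mult S ≤ s := mul_le_of_mem_nM (fun _ ha ha0 => mult_le ha ha0) hs
    have hsC : condC S + mult S + 1 ≤ s := by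
      have h' : N + 1 ≤ (N + 1) * mult S := Nat.le_mul_of_pos_right _ (by omega)
      omega
    obtain ⟨k, ρv, hρlt, hseq⟩ : ∃ k ρv, ρv < mult S ∧ s = condC S + ρv + k * mult S := by
      refine ⟨(s - condC S) / mult S, (s - condC S) % mult S, Nat.mod_lt _ (by omega), ?_⟩
      have hdm := Nat.div_add_mod (s - condC S) (mult S)
      have hc : mult S * ((s - condC S) / mult S) = ((s - condC S) / mult S) * mult S :=
        mul_comm _ _
      omega
    have hk1 : 1 ≤ k := by
      rcases Nat.eq_zero_or_pos k with h0 | h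
      · subst h0; simp at hseq; omega
      · exact h
    set ρ : Fin (mult S) := ⟨ρv, hρlt⟩ with hρdef
    set g : ℕ → ℕ := fun j => ordS S (condC S + ρv + j * mult S) with hg
    have hgstep : ∀ j, g j + 1 ≤ g (j + 1) := by
      intro j
      have h' : condC S + ρv + (j + 1) * mult S = (condC S + ρv + j * mult S) + mult S := by
        ring
      simp only [hg, h']
      exact ordS_add_mult hcl hfin (hC.2 _ (by omega))
    have hgmono : StrictMono g := strictMono_nat_of_lt_succ (fun j => by have := hgstep j; omega)
    have hords' : ordS S s = g k := by rw [hseq]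
    have hgF : g (Kf ρ) = F ρ := by simp only [hg, hF]; rfl
    have hKρ : g (Kf ρ) ≤ N := by
      have h' : F ρ ≤ Finset.univ.sup F := Finset.le_sup (Finset.mem_univ ρ)
      omega
    have hkK : Kf ρ < k := hgmono.lt_iff_lt.mp (by omega)
    have hstep2 : g (k - 1 + 1) = g (k - 1) + 1 := by
      simp only [hg]
      exact hKf ρ (k - 1) (by omega)
    have hk1e : k - 1 + 1 = k := by omega
    rw [hk1e] at hstep2
    have hord_pred : N ≤ g (k - 1) := by omega
    have hke : (k - 1) * mult S + mult S = k * mult S := by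
      calc (k - 1) * mult S + mult S = (k - 1 + 1) * mult S := by ring
      _ = k * mult S := by rw [hk1e]
    have hsm : s - mult S = condC S + ρv + (k - 1) * mult S := by omega
    have hsmS : s - mult S ∈ nM S N := by
      have h1 : s - mult S ∈ S := hC.2 _ (by omega)
      have h2 : N ≤ ordS S (s - mult S) := by rw [hsm]; exact hord_pred
      exact nM_anti hcl h2 (mem_nM_ordS h1)
    exact ⟨s - mult S, hsmS, show mult S + (s - mult S) = s by omega⟩
  · rintro _ ⟨y, hy, rfl⟩
    rw [nM_succ]
    have hm := mult_spec hfin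
    exact Set.add_mem_add ⟨hm.1, by simpa using hm.2⟩ hy

lemma red_spec : ∀ n, redNum S ≤ n → nM S (n + 1) = (fun y => mult S + y) '' nM S n := by
  have hbase : nM S (redNum S + 1) = (fun y => mult S + y) '' nM S (redNum S) := by
    obtain ⟨N, hN⟩ := exists_red hcl hfin
    have hne : {r : ℕ | nM S (r + 1) = (fun y => mult S + y) '' nM S r}.Nonempty := ⟨N, hN⟩
    exact Nat.sInf_mem hne
  intro n hn
  induction n, hn using Nat.le_induction with
  | base => exact hbase
  | succ n hn ih =>
    apply Set.Subset.antisymm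
    · intro s hs
      rw [nM_succ] at hs
      obtain ⟨m, hm, v, hv, rfl⟩ := Set.mem_add.mp hs
      rw [ih] at hv
      obtain ⟨w, hw, rfl⟩ := hv
      refine ⟨m + w, ?_, by ring⟩
      rw [nM_succ]
      exact Set.add_mem_add hm hw
    · rintro _ ⟨v, hv, rfl⟩
      rw [nM_succ] at hv ⊢
      obtain ⟨m, hm, w, hw, rfl⟩ := Set.mem_add.mp hv
      have hew : mult S + w ∈ nM S (n + 1) := by
        rw [ih]
        exact ⟨w, hw, rfl⟩
      show mult S + (m + w) ∈ (S \ {0}) + nM S (n + 1)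
      have heq : mult S + (m + w) = m + (mult S + w) := by ring
      rw [heq]
      exact Set.add_mem_add hm hew

lemma lS_bddAbove {x : ℕ} (hx : x ∈ S) :
    BddAbove {t : ℕ | ∃ s ∈ S, ordS S s ≤ redNum S ∧
      t = ordS S (s + x) - ordS S x - ordS S s} := by
  refine ⟨condC S + (redNum S + 1) * mult S + x, ?_⟩
  rintro t ⟨s, hs, hord, rfl⟩
  have h1 : s < condC S + (redNum S + 1) * mult S := lt_of_ordS_le hcl hfin hs hord
  have h2 : ordS S (s + x) ≤ s + x := ordS_le_self (hcl.2 s hs x hx)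
  omega

/-- KEY LEMMA: `ord(s + x) ≤ ord s + ord x + l_x(S)`. -/
lemma ord_add_le {x : ℕ} (hx : x ∈ S) :
    ∀ t, ∀ s ∈ S, ordS S s = t → ordS S (s + x) ≤ t + ordS S x + lS S x := by
  intro t
  induction t using Nat.strong_induction_on with
  | _ t ih =>
    intro s hs hst
    rcases le_or_gt t (redNum S) with hcase | hcase
    · have hmem : ordS S (s + x) - ordS S x - ordS S s ∈
          {t : ℕ | ∃ s ∈ S, ordS S s ≤ redNum S ∧
            t = ordS S (s + x) - ordS S x - ordS S s} := ⟨s, hs, by omega, rfl⟩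
      have hle : ordS S (s + x) - ordS S x - ordS S s ≤ lS S x :=
        le_csSup (lS_bddAbove hcl hfin hx) hmem
      omega
    · -- t > redNum S
      have he := mult_spec hfin
      have hs_mem : s ∈ nM S t := hst ▸ mem_nM_ordS hs
      have ht1 : t = (t - 1) + 1 := by omega
      have hred : nM S ((t - 1) + 1) = (fun y => mult S + y) '' nM S (t - 1) :=
        red_spec hcl hfin (t - 1) (by omega)
      rw [ht1, hred] at hs_mem
      obtain ⟨s'', hs'', hes0⟩ := hs_mem
      have hes : mult S + s'' = s := hes0
      have hs''S : s'' ∈ S := nM_subset hcl _ hs''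
      have hord_ge : t - 1 ≤ ordS S s'' := le_ordS hs''
      have hord_le : ordS S s'' ≤ t - 1 := by
        have h5 : ordS S s'' + 1 ≤ ordS S (mult S + s'') := by
          have hcomm : mult S + s'' = s'' + mult S := by ring
          rw [hcomm]
          exact ordS_add_mult hcl hfin hs''S
        rw [hes] at h5
        omega
      set T := ordS S (s + x) with hT
      rcases le_or_gt T (redNum S) with hTcase | hTcase
      · omega
      · have hsx : s + x ∈ nM S T := mem_nM_ordS (hcl.2 s hs x hx)
        have hT1 : T = (T - 1) + 1 := by omega
        have hredT : nM S ((T - 1) + 1) = (fun y => mult S + y) '' nM S (T - 1) :=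
          red_spec hcl hfin (T - 1) (by omega)
        rw [hT1, hredT] at hsx
        obtain ⟨v, hv, hev0⟩ := hsx
        have hev : mult S + v = s + x := hev0
        have hveq : v = s'' + x := by omega
        have hord_v : T - 1 ≤ ordS S (s'' + x) := hveq ▸ le_ordS hv
        have hih : ordS S (s'' + x) ≤ (t - 1) + ordS S x + lS S x :=
          ih (t - 1) (by omega) s'' hs''S (by omega)
        omega

end Conductor
end NumAux

namespace NumAux

variable {S : Set ℕ}

lemma mul_mem_nat (hcl : AddClosed S) {p : ℕ} (hp : p ∈ S) : ∀ c, c * p ∈ S := by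
  intro c
  induction c with
  | zero => simpa using hcl.1
  | succ c ih =>
    have h3 : (c + 1) * p = c * p + p := by ring
    rw [h3]
    exact hcl.2 _ ih _ hp

lemma ord_nsmul_le (hcl : AddClosed S) {p : ℕ} (hp : p ∈ S) (c : ℕ) :
    c * ordS S p ≤ ordS S (c * p) := by
  induction c with
  | zero => simp
  | succ c ih =>
    have h1 : c * p ∈ S := mul_mem_nat hcl hp c
    have h2 := ordS_superadd hcl h1 hp
    have h3 : (c + 1) * p = c * p + p := by ring
    have h4 : (c + 1) * ordS S p = c * ordS S p + ordS S p := by ring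
    rw [h3]
    omega

lemma ord_add_mul_le (hcl : AddClosed S) (hfin : {x : ℕ | x ∉ S}.Finite)
    {x z : ℕ} (hx : x ∈ S) (hz : z ∈ S) (c : ℕ) :
    ordS S (z + c * x) ≤ ordS S z + c * (ordS S x + lS S x) := by
  induction c with
  | zero => simp
  | succ c ih =>
    have h1 : z + c * x ∈ S := hcl.2 _ hz _ (mul_mem_nat hcl hx c)
    have h2 := ord_add_le hcl hfin hx (ordS S (z + c * x)) (z + c * x) h1 rfl
    have h3 : z + (c + 1) * x = (z + c * x) + x := by ring
    have h4 : (c + 1) * (ordS S x + lS S x)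
        = c * (ordS S x + lS S x) + (ordS S x + lS S x) := by ring
    rw [h3]
    omega

lemma exists_ap {q : ℕ} (hq1 : 1 ≤ q) :
    ∀ b, b ∈ S → ∃ w, w ∈ Ap S q ∧ ∃ c, b = w + c * q := by
  intro b
  induction b using Nat.strong_induction_on with
  | _ b ih =>
    intro hb
    by_cases hAp : b ∈ Ap S q
    · exact ⟨b, hAp, 0, by simp⟩
    · have hex : ∃ t ∈ S, b = t + q := by
        by_contra hne
        exact hAp ⟨hb, hne⟩
      obtain ⟨t, ht, rfl⟩ := hex
      obtain ⟨w, hw, c, rfl⟩ := ih t (by omega) ht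
      exact ⟨w, hw, c + 1, by ring⟩

lemma ap_unique_le (hcl : AddClosed S) {q : ℕ} (hqS : q ∈ S) {w z : ℕ} (hzA : z ∈ Ap S q)
    (hwS : w ∈ S) (hle : w ≤ z) (hmod : w ≡ z [MOD q]) : w = z := by
  obtain ⟨c, hc⟩ := (Nat.modEq_iff_dvd' hle).mp hmod
  rcases Nat.eq_zero_or_pos c with h0 | hpos
  · subst h0; simp at hc; omega
  · exfalso
    apply hzA.2
    have hqq : q * (c - 1) + q = q * c := by
      have h' : c - 1 + 1 = c := by omega
      calc q * (c - 1) + q = q * (c - 1 + 1) := by ring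
      _ = q * c := by rw [h']
    refine ⟨w + q * (c - 1), hcl.2 _ hwS _ ?_, by omega⟩
    have := mul_mem_nat hcl hqS (c - 1)
    rwa [mul_comm] at this

lemma ap_unique (hcl : AddClosed S) {q : ℕ} (hqS : q ∈ S) {w z : ℕ} (hwA : w ∈ Ap S q)
    (hzA : z ∈ Ap S q) (hmod : w ≡ z [MOD q]) : w = z := by
  rcases le_total w z with hle | hle
  · exact ap_unique_le hcl hqS hzA hwA.1 hle hmod
  · exact (ap_unique_le hcl hqS hwA hzA.1 hle hmod.symm).symm

lemma closure_one {s : Set ℕ} (hq : (1 : ℕ) ∈ AddSubmonoid.closure s) : (1 : ℕ) ∈ s := by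
  have : ∀ x, x ∈ AddSubmonoid.closure s → x = 1 → (1 : ℕ) ∈ s := by
    intro x hx
    induction hx using AddSubmonoid.closure_induction with
    | mem y hy => intro h; rwa [← h]
    | zero => intro h; omega
    | add a b ha hb iha ihb =>
      intro h
      rcases (by omega : a = 1 ∨ b = 1) with h1 | h1
      · exact iha h1
      · exact ihb h1
  exact this 1 hq rfl

lemma addClosed_coe (s : Set ℕ) :
    AddClosed ((AddSubmonoid.closure s : AddSubmonoid ℕ) : Set ℕ) :=
  ⟨zero_mem _, fun a ha b hb => add_mem ha hb⟩

end NumAux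

namespace NumAux

variable (G : Gluing)

lemma hcl₁ : AddClosed G.S₁ := addClosed_coe _
lemma hcl₂ : AddClosed G.S₂ := addClosed_coe _
lemma hclS : AddClosed G.S := addClosed_coe _
lemma hfin₂ : {x : ℕ | x ∉ G.S₂}.Finite := G.hnum₂.2.2

lemma gen_pos₁ (i : Fin G.d) : 1 ≤ G.m i := by
  rcases Nat.eq_zero_or_pos (G.m i) with h0 | h
  · exact absurd (by rw [h0]; exact zero_mem _) (G.hmin₁ i)
  · exact h

lemma gen_pos₂ (j : Fin G.k) : 1 ≤ G.n j := by
  rcases Nat.eq_zero_or_pos (G.n j) with h0 | h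
  · exact absurd (by rw [h0]; exact zero_mem _) (G.hmin₂ j)
  · exact h

lemma q_pos : 1 ≤ G.q := by
  rcases Nat.eq_zero_or_pos G.q with h0 | h
  · exfalso
    have hp1 : G.p = 1 := by
      have h1 := G.hpq
      rw [h0] at h1
      simpa using h1
    have h2 : (1 : ℕ) ∈ AddSubmonoid.closure (Set.range G.m) := hp1 ▸ G.hp
    exact G.hpm (hp1 ▸ closure_one h2)
  · exact h

lemma p_pos : 1 ≤ G.p := by
  rcases Nat.eq_zero_or_pos G.p with h0 | h
  · exfalso
    have hq1 : G.q = 1 := by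
      have h1 := G.hpq
      rw [h0] at h1
      simpa using h1
    have h2 : (1 : ℕ) ∈ AddSubmonoid.closure (Set.range G.n) := hq1 ▸ G.hq
    exact G.hqn (hq1 ▸ closure_one h2)
  · exact h

lemma q_mul_mem {x : ℕ} (hx : x ∈ G.S₁) : G.q * x ∈ G.S := by
  induction hx using AddSubmonoid.closure_induction with
  | mem y hy =>
    exact AddSubmonoid.subset_closure (Or.inl ⟨y, hy, rfl⟩)
  | zero => simpa [Gluing.S] using (zero_mem _ : (0:ℕ) ∈ AddSubmonoid.closure _)
  | add a b ha hb iha ihb =>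
    have : G.q * (a + b) = G.q * a + G.q * b := by ring
    rw [this]
    exact add_mem iha ihb

lemma p_mul_mem {x : ℕ} (hx : x ∈ G.S₂) : G.p * x ∈ G.S := by
  induction hx using AddSubmonoid.closure_induction with
  | mem y hy =>
    exact AddSubmonoid.subset_closure (Or.inr ⟨y, hy, rfl⟩)
  | zero => simpa [Gluing.S] using (zero_mem _ : (0:ℕ) ∈ AddSubmonoid.closure _)
  | add a b ha hb iha ihb =>
    have : G.p * (a + b) = G.p * a + G.p * b := by ring
    rw [this]
    exact add_mem iha ihb

lemma S_decomp {u : ℕ} (hu : u ∈ G.S) :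
    ∃ a ∈ G.S₁, ∃ b ∈ G.S₂, u = G.q * a + G.p * b := by
  induction hu using AddSubmonoid.closure_induction with
  | mem y hy =>
    rcases hy with ⟨x, hx, rfl⟩ | ⟨x, hx, rfl⟩
    · exact ⟨x, AddSubmonoid.subset_closure hx, 0, zero_mem _, by ring⟩
    · exact ⟨0, zero_mem _, x, AddSubmonoid.subset_closure hx, by ring⟩
  | zero => exact ⟨0, zero_mem _, 0, zero_mem _, by ring⟩
  | add a b ha hb iha ihb =>
    obtain ⟨a1, ha1, b1, hb1, rfl⟩ := iha
    obtain ⟨a2, ha2, b2, hb2, rfl⟩ := ihb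
    exact ⟨a1 + a2, add_mem ha1 ha2, b1 + b2, add_mem hb1 hb2, by ring⟩

lemma q_nM {x t : ℕ} (hx : x ∈ nM G.S₁ t) : G.q * x ∈ nM G.S t := by
  induction t generalizing x with
  | zero => exact q_mul_mem G hx
  | succ t ih =>
    obtain ⟨a, ha, b, hb, rfl⟩ := Set.mem_add.mp hx
    have hqa : G.q * a ∈ G.S \ {0} := by
      refine ⟨q_mul_mem G ha.1, ?_⟩
      have h1 : a ≠ 0 := by simpa using ha.2
      have := q_pos G
      simp only [Set.mem_singleton_iff]
      positivity
    have : G.q * (a + b) = G.q * a + G.q * b := by ring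
    rw [this, nM_succ]
    exact Set.add_mem_add hqa (ih hb)

lemma p_nM {x t : ℕ} (hx : x ∈ nM G.S₂ t) : G.p * x ∈ nM G.S t := by
  induction t generalizing x with
  | zero => exact p_mul_mem G hx
  | succ t ih =>
    obtain ⟨a, ha, b, hb, rfl⟩ := Set.mem_add.mp hx
    have hpa : G.p * a ∈ G.S \ {0} := by
      refine ⟨p_mul_mem G ha.1, ?_⟩
      have h1 : a ≠ 0 := by simpa using ha.2
      have := p_pos G
      simp only [Set.mem_singleton_iff]
      positivity
    have : G.p * (a + b) = G.p * a + G.p * b := by ring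
    rw [this, nM_succ]
    exact Set.add_mem_add hpa (ih hb)

/-- lower bound for the order of `q z₁ + p z₂` in the glued semigroup. -/
lemma ord_ge {z₁ z₂ : ℕ} (h₁ : z₁ ∈ G.S₁) (h₂ : z₂ ∈ G.S₂) :
    ordS G.S₁ z₁ + ordS G.S₂ z₂ ≤ ordS G.S (G.q * z₁ + G.p * z₂) :=
  le_ordS (nM_add_mem (hclS G) (q_nM G (mem_nM_ordS h₁)) (p_nM G (mem_nM_ordS h₂)))

/-- counting upper bound for the order in the glued semigroup. -/
lemma count : ∀ t, ∀ u ∈ nM G.S t, ∃ a ∈ G.S₁, ∃ b ∈ G.S₂,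
    u = G.q * a + G.p * b ∧ t ≤ ordS G.S₁ a + ordS G.S₂ b := by
  intro t
  induction t with
  | zero =>
    intro u hu
    obtain ⟨a, ha, b, hb, rfl⟩ := S_decomp G hu
    exact ⟨a, ha, b, hb, rfl, by omega⟩
  | succ t ih =>
    intro u hu
    obtain ⟨v, hv, w, hw, rfl⟩ := Set.mem_add.mp hu
    obtain ⟨a, ha, b, hb, rfl, hcount⟩ := ih w hw
    obtain ⟨x, hx, y, hy, rfl⟩ := S_decomp G hv.1
    have hxy : x ≠ 0 ∨ y ≠ 0 := by
      by_contra hc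
      push_neg at hc
      apply hv.2
      simp [hc.1, hc.2]
    refine ⟨x + a, add_mem hx ha, y + b, add_mem hy hb, by ring, ?_⟩
    have h1 : ordS G.S₁ x + ordS G.S₁ a ≤ ordS G.S₁ (x + a) := ordS_superadd (hcl₁ G) hx ha
    have h2 : ordS G.S₂ y + ordS G.S₂ b ≤ ordS G.S₂ (y + b) := ordS_superadd (hcl₂ G) hy hb
    have h3 : 1 ≤ ordS G.S₁ x + ordS G.S₂ y := by
      rcases hxy with h | h
      · have := one_le_ordS (hcl₁ G) hx h
        omega
      · have := one_le_ordS (hcl₂ G) hy h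
        omega
    omega

lemma qS₂ : G.q ∈ G.S₂ := G.hq
lemma pS₁ : G.p ∈ G.S₁ := G.hp

end NumAux

/-- for a specific gluing `S` of `S₁` and `S₂`, every `u ∈ S` can be
written `u = qz₁ + pz₂` with `z₁ ∈ S₁` and `z₂ ∈ AP(S₂,q)`; this representation is
unique and satisfies `ord_S(u) = ord_{S₁}(z₁) + ord_{S₂}(z₂)`. -/
theorem stmt11 (G : Gluing) (hG : G.Specific) :
    ∀ u ∈ G.S, ∃ z₁ ∈ G.S₁, ∃ z₂ ∈ Ap G.S₂ G.q,
      u = G.q * z₁ + G.p * z₂ ∧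
      ordS G.S u = ordS G.S₁ z₁ + ordS G.S₂ z₂ ∧
      ∀ s₁ ∈ G.S₁, ∀ s₂ ∈ Ap G.S₂ G.q,
        u = G.q * s₁ + G.p * s₂ → s₁ = z₁ ∧ s₂ = z₂ := by
  intro u hu
  have hq1 := NumAux.q_pos G
  have hp1 := NumAux.p_pos G
  have hcl1 := NumAux.hcl₁ G
  have hcl2 := NumAux.hcl₂ G
  have hclS := NumAux.hclS G
  have hfin2 := NumAux.hfin₂ G
  have hqS₂ : G.q ∈ G.S₂ := G.hq
  have hpS₁ : G.p ∈ G.S₁ := G.hp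
  obtain ⟨a, ha, b, hb, rfl⟩ := NumAux.S_decomp G hu
  obtain ⟨w, hw, c, rfl⟩ := NumAux.exists_ap hq1 b hb
  set z₁ := a + c * G.p with hz₁
  have hz₁S : z₁ ∈ G.S₁ := hcl1.2 a ha _ (NumAux.mul_mem_nat hcl1 hpS₁ c)
  have hueq : G.q * a + G.p * (w + c * G.q) = G.q * z₁ + G.p * w := by
    rw [hz₁]; ring
  have huniq : ∀ s₁ ∈ G.S₁, ∀ s₂ ∈ Ap G.S₂ G.q,
      G.q * a + G.p * (w + c * G.q) = G.q * s₁ + G.p * s₂ → s₁ = z₁ ∧ s₂ = w := by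
    intro s₁ hs₁ s₂ hs₂ heq
    rw [hueq] at heq
    have hmod : G.p * s₂ ≡ G.p * w [MOD G.q] := by
      have h1 : (G.p * s₂ + s₁ * G.q) % G.q = (G.p * s₂) % G.q :=
        Nat.add_mul_mod_self_right _ _ _
      have h2 : (G.p * w + z₁ * G.q) % G.q = (G.p * w) % G.q :=
        Nat.add_mul_mod_self_right _ _ _
      have h3 : G.p * s₂ + s₁ * G.q = G.p * w + z₁ * G.q := by
        have e1 : G.p * s₂ + s₁ * G.q = G.q * s₁ + G.p * s₂ := by ring
        have e2 : G.p * w + z₁ * G.q = G.q * z₁ + G.p * w := by ring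
        omega
      show (G.p * s₂) % G.q = (G.p * w) % G.q
      rw [← h1, ← h2, h3]
    have hmod2 : s₂ ≡ w [MOD G.q] :=
      Nat.ModEq.cancel_left_of_coprime (by rw [Nat.gcd_comm]; exact G.hpq) hmod
    have hs2w : s₂ = w := NumAux.ap_unique hcl2 hqS₂ hs₂ hw hmod2
    subst hs2w
    refine ⟨?_, rfl⟩
    have h4 : G.q * s₁ = G.q * z₁ := by omega
    exact Nat.eq_of_mul_eq_mul_left (by omega) h4
  refine ⟨z₁, hz₁S, w, hw, hueq, ?_, huniq⟩
  apply le_antisymm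
  · -- upper bound via counting and the specific-gluing estimates
    have hmem := NumAux.mem_nM_ordS hu
    obtain ⟨X, hX, Y, hY, hdec, hcount⟩ := NumAux.count G _ _ hmem
    obtain ⟨w', hw', c', rfl⟩ := NumAux.exists_ap hq1 Y hY
    have hXS : X + c' * G.p ∈ G.S₁ := hcl1.2 X hX _ (NumAux.mul_mem_nat hcl1 hpS₁ c')
    have hid : X + c' * G.p = z₁ ∧ w' = w := by
      apply huniq (X + c' * G.p) hXS w' hw'
      rw [hdec]; ring
    obtain ⟨hXz, rfl⟩ := hid
    have hB : ordS G.S₂ (w' + c' * G.q) ≤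
        ordS G.S₂ w' + c' * (ordS G.S₂ G.q + lS G.S₂ G.q) :=
      NumAux.ord_add_mul_le hcl2 hfin2 hqS₂ hw.1 c'
    have hspec : ordS G.S₂ G.q + lS G.S₂ G.q ≤ ordS G.S₁ G.p := hG
    have hc' : c' * (ordS G.S₂ G.q + lS G.S₂ G.q) ≤ c' * ordS G.S₁ G.p :=
      Nat.mul_le_mul_left _ hspec
    have hA1 : ordS G.S₁ X + ordS G.S₁ (c' * G.p) ≤ ordS G.S₁ (X + c' * G.p) :=
      NumAux.ordS_superadd hcl1 hX (NumAux.mul_mem_nat hcl1 hpS₁ c')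
    have hA2 : c' * ordS G.S₁ G.p ≤ ordS G.S₁ (c' * G.p) :=
      NumAux.ord_nsmul_le hcl1 hpS₁ c'
    rw [hXz] at hA1
    omega
  · rw [hueq]
    exact NumAux.ord_ge G hz₁S hw.1
end

section
/- Let S = ⟨qm₁,…,qm_d, pn₁,…,pn_k⟩ be a specific gluing of S₁ and S₂. Then the multiplicity of S equals q·m₁, i.e. m(S) = qm₁. -/
open scoped Pointwise

namespace Aux


lemma mem_nM_succ {S : Set ℕ} {t x : ℕ} :
    x ∈ nM S (t + 1) ↔ ∃ a ∈ S \ {0}, ∃ y ∈ nM S t, a + y = x := Set.mem_add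

lemma nM_subset {S : Set ℕ} (hadd : ∀ a ∈ S, ∀ b ∈ S, a + b ∈ S) :
    ∀ t, nM S t ⊆ S := by
  intro t
  induction t with
  | zero => exact fun x hx => hx
  | succ t ih =>
    intro x hx
    rcases mem_nM_succ.1 hx with ⟨a, ha, y, hy, hxy⟩
    exact hxy ▸ hadd a ha.1 y (ih hy)

lemma nM_ge {S : Set ℕ} {g : ℕ} (hg : ∀ y ∈ S, y ≠ 0 → g ≤ y) :
    ∀ t x, x ∈ nM S t → t * g ≤ x := by
  intro t
  induction t with
  | zero => intro x _; simp
  | succ t ih =>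
    intro x hx
    rcases mem_nM_succ.1 hx with ⟨a, ha, y, hy, hxy⟩
    have h1 := hg a ha.1 ha.2
    have h2 := ih y hy
    have he : (t+1) * g = t * g + g := by ring
    omega

lemma add_nM {S : Set ℕ} {a z t : ℕ} (ha : a ∈ S) (ha0 : a ≠ 0) (hz : z ∈ nM S t) :
    a + z ∈ nM S (t + 1) :=
  mem_nM_succ.2 ⟨a, ⟨ha, ha0⟩, z, hz, rfl⟩

lemma mul_add_nM {S : Set ℕ} {a : ℕ} (ha : a ∈ S) (ha0 : a ≠ 0) :
    ∀ k {z t}, z ∈ nM S t → k * a + z ∈ nM S (t + k) := by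
  intro k
  induction k with
  | zero => intro z t hz; simpa using hz
  | succ k ih =>
    intro z t hz
    have := add_nM ha ha0 (ih hz)
    have he : a + (k * a + z) = (k+1) * a + z := by ring
    rw [he] at this
    exact this

lemma mul_mem_nM {S : Set ℕ} {a : ℕ} (ha : a ∈ S) (ha0 : a ≠ 0) (h0 : (0:ℕ) ∈ S)
    (B : ℕ) : B * a ∈ nM S B := by
  have := mul_add_nM ha ha0 B (z := 0) (t := 0) h0
  simpa using this

lemma nM_anti {S : Set ℕ} (h0 : (0:ℕ) ∈ S) (hadd : ∀ a ∈ S, ∀ b ∈ S, a + b ∈ S) :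
    ∀ t, nM S (t + 1) ⊆ nM S t := by
  intro t
  induction t with
  | zero =>
    intro x hx
    rcases mem_nM_succ.1 hx with ⟨a, ha, y, hy, hxy⟩
    exact hxy ▸ hadd a ha.1 y hy
  | succ t ih =>
    intro x hx
    rcases mem_nM_succ.1 hx with ⟨a, ha, y, hy, hxy⟩
    exact hxy ▸ add_nM ha.1 ha.2 (ih hy)

lemma nM_anti' {S : Set ℕ} (h0 : (0:ℕ) ∈ S) (hadd : ∀ a ∈ S, ∀ b ∈ S, a + b ∈ S)
    {t t' : ℕ} (h : t' ≤ t) : nM S t ⊆ nM S t' := by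
  induction t with
  | zero => simpa [Nat.le_zero.1 h]
  | succ t ih =>
    rcases Nat.eq_or_lt_of_le h with rfl | h'
    · exact fun x hx => hx
    · exact fun x hx => ih (Nat.lt_succ_iff.1 h') (nM_anti h0 hadd t hx)

lemma ord_bddAbove {S : Set ℕ} {x : ℕ} (hx0 : x ≠ 0) : BddAbove {t : ℕ | x ∈ nM S t} := by
  refine ⟨x, fun t ht => ?_⟩
  have := nM_ge (S := S) (g := 1) (fun y _ hy => Nat.one_le_iff_ne_zero.2 hy) t x ht
  omega

lemma mem_nM_ordS {S : Set ℕ} {x : ℕ} (hx : x ∈ S) (hx0 : x ≠ 0) :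
    x ∈ nM S (ordS S x) := by
  have : sSup {t : ℕ | x ∈ nM S t} ∈ {t : ℕ | x ∈ nM S t} :=
    Nat.sSup_mem ⟨0, show x ∈ nM S 0 from hx⟩ (ord_bddAbove hx0)
  exact this

lemma le_ordS {S : Set ℕ} {x t : ℕ} (hx0 : x ≠ 0) (h : x ∈ nM S t) : t ≤ ordS S x :=
  le_csSup (ord_bddAbove hx0) h


-- claim2: everything at least t*n₁ + c is in nM t
lemma mem_nM_of_large {S : Set ℕ} {n₁ c : ℕ} (hn : n₁ ∈ S) (hn0 : n₁ ≠ 0)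
    (hc : ∀ x, c ≤ x → x ∈ S) :
    ∀ t x, t * n₁ + c ≤ x → x ∈ nM S t := by
  intro t
  induction t with
  | zero => intro x hx; exact hc x (by omega)
  | succ t ih =>
    intro x hx
    have h1 : x - n₁ ∈ nM S t := by
      apply ih (x - n₁)
      have h2 : (t+1)*n₁ = t*n₁ + n₁ := by ring
      omega
    have h2 := add_nM hn hn0 h1
    have he : n₁ + (x - n₁) = x := by
      have : (t+1) * n₁ = t * n₁ + n₁ := by ring
      omega
    rwa [he] at h2

-- decomposition: pull out all n₁-summands
lemma nM_decomp {S : Set ℕ} {n₁ : ℕ} (hmin : ∀ y ∈ S, y ≠ 0 → n₁ ≤ y) :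
    ∀ t x, x ∈ nM S t → ∃ j y, j ≤ t ∧ y ∈ nM S (t - j) ∧ x = j * n₁ + y ∧
      (t - j) * (n₁ + 1) ≤ y := by
  intro t
  induction t with
  | zero => intro x hx; exact ⟨0, x, le_refl 0, hx, by omega, by omega⟩
  | succ t ih =>
    intro x hx
    rcases mem_nM_succ.1 hx with ⟨a, ha, z, hz, hxy⟩
    rcases ih z hz with ⟨j, y, hj, hy, hzy, hylb⟩
    have hee : (j+1) * n₁ = j * n₁ + n₁ := by ring
    by_cases hane : a = n₁
    · refine ⟨j + 1, y, by omega, ?_, by omega, ?_⟩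
      · have : t + 1 - (j + 1) = t - j := by omega
        rwa [this]
      · have : t + 1 - (j + 1) = t - j := by omega
        rw [this]; exact hylb
    · have han : n₁ + 1 ≤ a := by
        have := hmin a ha.1 ha.2
        omega
      refine ⟨j, a + y, by omega, ?_, by omega, ?_⟩
      · have h1 : a + y ∈ nM S (t - j + 1) := add_nM ha.1 ha.2 hy
        have : t + 1 - j = t - j + 1 := by omega
        rwa [this]
      · have : (t + 1 - j) * (n₁ + 1) = (t - j) * (n₁+1) + (n₁+1) := by
          have : t + 1 - j = (t - j) + 1 := by omega
          rw [this]; ring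
        omega

lemma nM_ge' {S : Set ℕ} {g : ℕ} (hg : ∀ y ∈ S, y ≠ 0 → g ≤ y) :
    ∀ t x, x ∈ nM S t → t * g ≤ x := by
  intro t
  induction t with
  | zero => intro x _; simp
  | succ t ih =>
    intro x hx
    rcases mem_nM_succ.1 hx with ⟨a, ha, y, hy, hxy⟩
    have h1 := hg a ha.1 ha.2
    have h2 := ih y hy
    have he : (t+1) * g = t * g + g := by ring
    omega

-- the reduction-number witness: nM (c+1) = n₁ + nM c
lemma redNum_witness {S : Set ℕ} {n₁ c : ℕ} (hn : n₁ ∈ S) (hn0 : n₁ ≠ 0) (h0 : (0:ℕ) ∈ S)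
    (hmin : ∀ y ∈ S, y ≠ 0 → n₁ ≤ y) (hc : ∀ x, c ≤ x → x ∈ S) :
    nM S (c + 1) = (fun y => n₁ + y) '' nM S c := by
  ext x
  constructor
  · intro hx
    rcases nM_decomp hmin (c+1) x hx with ⟨j, y, hj, hy, hxy, hylb⟩
    rcases Nat.eq_zero_or_pos j with rfl | hjpos
    · -- x = y ≥ (c+1)(n₁+1)
      simp at hxy hylb
      have hn1 : 0 < n₁ := Nat.pos_of_ne_zero hn0
      have hxlb : (c+1) * (n₁+1) ≤ x := by
        have : c + 1 - 0 = c + 1 := rfl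
        omega
      have hxn : x - n₁ ∈ nM S c := by
        apply mem_nM_of_large hn hn0 hc
        have : (c+1)*(n₁+1) = c * n₁ + n₁ + c + 1 := by ring
        omega
      refine ⟨x - n₁, hxn, ?_⟩
      show n₁ + (x - n₁) = x
      have : (c+1)*(n₁+1) = c * n₁ + n₁ + c + 1 := by ring
      omega
    · refine ⟨x - n₁, ?_, ?_⟩
      · have h1 : (j - 1) * n₁ + y ∈ nM S ((c + 1 - j) + (j - 1)) := mul_add_nM hn hn0 (j-1) hy
        have he : (c + 1 - j) + (j - 1) = c := by omega
        rw [he] at h1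
        have hx2 : x - n₁ = (j - 1) * n₁ + y := by
          have hj1 : j = (j - 1) + 1 := by omega
          have hjm : j * n₁ = (j-1) * n₁ + n₁ := by
            calc j * n₁ = ((j-1)+1) * n₁ := by rw [← hj1]
              _ = (j-1) * n₁ + n₁ := by ring
          omega

        rwa [hx2]
      · show n₁ + (x - n₁) = x
        have hn1 : 0 < n₁ := Nat.pos_of_ne_zero hn0
        have : j * n₁ ≥ n₁ := Nat.le_mul_of_pos_left n₁ hjpos
        omega
  · rintro ⟨y, hy, rfl⟩
    exact add_nM hn hn0 hy
end Aux

/-- for a specific gluing `S` of `S₁` and `S₂`, `m(S) = q·m₁`. -/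
theorem stmt13 (G : Gluing) (hG : G.Specific) :
    mult G.S = G.q * G.m₁ := by
  -- positivity of generators
  have hmpos : ∀ i, 0 < G.m i := by
    intro i
    rcases Nat.eq_zero_or_pos (G.m i) with h | h
    · exact absurd (by rw [h]; exact zero_mem _) (G.hmin₁ i)
    · exact h
  have hnpos : ∀ j, 0 < G.n j := by
    intro j
    rcases Nat.eq_zero_or_pos (G.n j) with h | h
    · exact absurd (by rw [h]; exact zero_mem _) (G.hmin₂ j)
    · exact h
  have hm1pos : 0 < G.m₁ := hmpos _
  have hn1pos : 0 < G.n₁ := hnpos _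
  have hm1le : ∀ i, G.m₁ ≤ G.m i := fun i => G.hm.monotone (Fin.le_def.2 (Nat.zero_le _))
  have hn1le : ∀ j, G.n₁ ≤ G.n j := fun j => G.hn.monotone (Fin.le_def.2 (Nat.zero_le _))
  -- lower bounds on nonzero elements
  have hS₁lb : ∀ x ∈ G.S₁, x ≠ 0 → G.m₁ ≤ x := by
    intro x hx
    refine (AddSubmonoid.closure_induction
      (motive := fun y _ => y = 0 ∨ G.m₁ ≤ y) ?_ (Or.inl rfl) ?_ hx : x = 0 ∨ G.m₁ ≤ x) |>.resolve_left
    · rintro y ⟨i, rfl⟩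
      exact Or.inr (hm1le i)
    · rintro y z _ _ (rfl | hy) (rfl | hz) <;> simp_all <;> omega
  have hS₂lb : ∀ x ∈ G.S₂, x ≠ 0 → G.n₁ ≤ x := by
    intro x hx
    refine (AddSubmonoid.closure_induction
      (motive := fun y _ => y = 0 ∨ G.n₁ ≤ y) ?_ (Or.inl rfl) ?_ hx : x = 0 ∨ G.n₁ ≤ x) |>.resolve_left
    · rintro y ⟨j, rfl⟩
      exact Or.inr (hn1le j)
    · rintro y z _ _ (rfl | hy) (rfl | hz) <;> simp_all <;> omega
  -- basic membership
  have hn₁mem : G.n₁ ∈ G.S₂ := AddSubmonoid.subset_closure ⟨⟨0, G.hk⟩, rfl⟩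
  have hS₂0 : (0:ℕ) ∈ G.S₂ := G.hnum₂.1
  have hS₂add : ∀ a ∈ G.S₂, ∀ b ∈ G.S₂, a + b ∈ G.S₂ := G.hnum₂.2.1
  -- p, q nonzero
  have hq0 : G.q ≠ 0 := by
    intro h
    have hp1 : G.p = 1 := by
      have := G.hpq
      rw [h, Nat.gcd_zero_right] at this
      exact this
    have hm11 : G.m₁ = 1 := by
      have h1 := hS₁lb G.p G.hp (by omega)
      omega
    exact G.hpm ⟨⟨0, G.hd⟩, by rw [show G.m ⟨0, G.hd⟩ = G.m₁ from rfl]; omega⟩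
  have hp0 : G.p ≠ 0 := by
    intro h
    have hq1 : G.q = 1 := by
      have := G.hpq
      rw [h, Nat.gcd_zero_left] at this
      exact this
    have hn11 : G.n₁ = 1 := by
      have h1 := hS₂lb G.q G.hq (by omega)
      omega
    exact G.hqn ⟨⟨0, G.hk⟩, by rw [show G.n ⟨0, G.hk⟩ = G.n₁ from rfl]; omega⟩
  -- conductor of S₂
  obtain ⟨ub, hub⟩ : BddAbove {x : ℕ | x ∉ G.S₂} := (G.hnum₂.2.2).bddAbove
  set c : ℕ := ub + 1 with hc_def
  have hc : ∀ x, c ≤ x → x ∈ G.S₂ := by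
    intro x hx
    by_contra h
    have := hub h
    omega
  -- multiplicity of S₂
  have hmult₂ : mult G.S₂ = G.n₁ := by
    refine le_antisymm (Nat.sInf_le ⟨hn₁mem, hn1pos.ne'⟩) ?_
    exact le_csInf ⟨G.n₁, hn₁mem, hn1pos.ne'⟩ (fun b hb => hS₂lb b hb.1 hb.2)
  -- reduction number identity
  have hwit : nM G.S₂ (c + 1) = (fun y => mult G.S₂ + y) '' nM G.S₂ c := by
    rw [hmult₂]
    exact Aux.redNum_witness hn₁mem hn1pos.ne' hS₂0 hS₂lb hc
  have hrmem : nM G.S₂ (redNum G.S₂ + 1) =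
      (fun y => mult G.S₂ + y) '' nM G.S₂ (redNum G.S₂) :=
    Nat.sInf_mem (⟨c, hwit⟩ : Set.Nonempty {r : ℕ | nM G.S₂ (r+1) = (fun y => mult G.S₂ + y) '' nM G.S₂ r})
  have hrid : nM G.S₂ (redNum G.S₂ + 1) =
      (fun y => G.n₁ + y) '' nM G.S₂ (redNum G.S₂) := by rw [← hmult₂]; exact hrmem
  set r : ℕ := redNum G.S₂ with hr_def
  -- bound on elements of small order
  have hsmall : ∀ s' : ℕ, s' ∈ G.S₂ → ordS G.S₂ s' ≤ r → s' < (r+1) * G.n₁ + c := by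
    intro s' hs' ho
    by_contra h
    push_neg at h
    have hmem : s' ∈ nM G.S₂ (r+1) := Aux.mem_nM_of_large hn₁mem hn1pos.ne' hc (r+1) s' h
    have hs'0 : s' ≠ 0 := by
      have : 0 < (r+1) * G.n₁ := Nat.mul_pos (by omega) hn1pos
      omega
    have := Aux.le_ordS hs'0 hmem
    omega
  -- boundedness of the lS-defining set
  have hLbdd : BddAbove {t : ℕ | ∃ s ∈ G.S₂, ordS G.S₂ s ≤ redNum G.S₂ ∧
      t = ordS G.S₂ (s + G.q) - ordS G.S₂ G.q - ordS G.S₂ s} := by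
    refine ⟨(r+1) * G.n₁ + c + G.q, ?_⟩
    rintro t ⟨s', hs', ho, rfl⟩
    have hb1 := hsmall s' hs' ho
    have hsq : s' + G.q ∈ G.S₂ := hS₂add s' hs' G.q G.hq
    have hsq0 : s' + G.q ≠ 0 := by omega
    have hord_le : ordS G.S₂ (s' + G.q) ≤ s' + G.q := by
      have h1 := Aux.nM_ge (S := G.S₂) (g := 1) (fun y _ hy => Nat.one_le_iff_ne_zero.2 hy)
        (ordS G.S₂ (s' + G.q)) (s' + G.q) (Aux.mem_nM_ordS hsq hsq0)
      omega
    omega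
  -- the key inequality : q ≤ ordS₁(p) * n₁
  set u : ℕ := ordS G.S₁ G.p with hu_def
  have hspec : ordS G.S₂ G.q + lS G.S₂ G.q ≤ u := hG
  set B : ℕ := G.q / G.n₁ with hB_def
  have hqdm : B * G.n₁ + G.q % G.n₁ = G.q := by
    rw [Nat.mul_comm, hB_def]; exact Nat.div_add_mod G.q G.n₁
  have hqu : G.q ≤ u * G.n₁ := by
    by_cases hρ : G.q % G.n₁ = 0
    · -- q is a multiple of n₁
      have hqB : G.q = B * G.n₁ := by omega
      have hmem : G.q ∈ nM G.S₂ B := by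
        rw [hqB]; exact Aux.mul_mem_nM hn₁mem hn1pos.ne' hS₂0 B
      have htB : B ≤ ordS G.S₂ G.q := Aux.le_ordS hq0 hmem
      have hBu : B ≤ u := by omega
      calc G.q = B * G.n₁ := hqB
        _ ≤ u * G.n₁ := Nat.mul_le_mul_right _ hBu
    · -- q is not a multiple of n₁ : use the Apéry element of -q mod n₁
      set T : Set ℕ := {x | x ∈ G.S₂ ∧ (G.q + x) % G.n₁ = 0} with hT_def
      have hx₀ : G.n₁ * (G.q + c) - G.q ∈ T := by
        have hge : G.q + c ≤ G.n₁ * (G.q + c) := by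
          calc G.q + c = 1 * (G.q + c) := (one_mul _).symm
            _ ≤ G.n₁ * (G.q + c) := Nat.mul_le_mul_right _ hn1pos
        constructor
        · exact hc _ (by omega)
        · have he : G.q + (G.n₁ * (G.q + c) - G.q) = G.n₁ * (G.q + c) := by omega
          rw [he, Nat.mul_mod_right]
      set s : ℕ := sInf T with hs_def
      have hsT : s ∈ T := Nat.sInf_mem ⟨_, hx₀⟩
      have hs0 : s ≠ 0 := by
        intro h
        have h2 := hsT.2
        rw [h, Nat.add_zero] at h2
        exact hρ h2
      have hsS₂ : s ∈ G.S₂ := hsT.1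
      -- ord s ≤ r
      have hords : ordS G.S₂ s ≤ r := by
        by_contra h
        push_neg at h
        have h1 : s ∈ nM G.S₂ (ordS G.S₂ s) := Aux.mem_nM_ordS hsS₂ hs0
        have h2 : s ∈ nM G.S₂ (r + 1) := Aux.nM_anti' hS₂0 hS₂add h (by exact h1)
        rw [hrid] at h2
        obtain ⟨y, hy, hy2⟩ := h2
        have hy2' : G.n₁ + y = s := hy2
        have hyS₂ : y ∈ G.S₂ := Aux.nM_subset hS₂add r hy
        have hyT : y ∈ T := by
          refine ⟨hyS₂, ?_⟩
          have h3 : (G.q + s) % G.n₁ = 0 := hsT.2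
          have h4 : G.q + s = (G.q + y) + G.n₁ := by omega
          rw [h4, Nat.add_mod_right] at h3
          exact h3
        have := Nat.sInf_le hyT
        omega
      set cs : ℕ := ordS G.S₂ s with hcs_def
      have hcsmul : cs * G.n₁ ≤ s :=
        Aux.nM_ge hS₂lb cs s (Aux.mem_nM_ordS hsS₂ hs0)
      set b : ℕ := s / G.n₁ with hb_def
      have hsdm : b * G.n₁ + s % G.n₁ = s := by
        rw [Nat.mul_comm, hb_def]; exact Nat.div_add_mod s G.n₁
      have hρe : G.q % G.n₁ + s % G.n₁ = G.n₁ := by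
        have h3 : (G.q + s) % G.n₁ = 0 := hsT.2
        have hdvd : G.n₁ ∣ G.q % G.n₁ + s % G.n₁ := by
          have := Nat.add_mod G.q s G.n₁
          rw [h3] at this
          exact (Nat.dvd_of_mod_eq_zero this.symm)
        obtain ⟨k, hk⟩ := hdvd
        have hρlt : G.q % G.n₁ < G.n₁ := Nat.mod_lt _ hn1pos
        have helt : s % G.n₁ < G.n₁ := Nat.mod_lt _ hn1pos
        rcases Nat.lt_or_ge k 2 with hk2 | hk2
        · interval_cases k <;> omega
        · have : G.n₁ * 2 ≤ G.n₁ * k := Nat.mul_le_mul_left _ hk2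
          omega
      have hcsb : cs ≤ b := by
        by_contra h
        push_neg at h
        have : (b + 1) * G.n₁ ≤ cs * G.n₁ := Nat.mul_le_mul_right _ (by omega)
        have he : (b + 1) * G.n₁ = b * G.n₁ + G.n₁ := by ring
        omega
      -- q + s is a multiple of n₁ of high order
      have hqsD : G.q + s = (B + b + 1) * G.n₁ := by
        have he : (B + b + 1) * G.n₁ = B * G.n₁ + b * G.n₁ + G.n₁ := by ring
        omega
      have hmemD : s + G.q ∈ nM G.S₂ (B + b + 1) := by
        rw [add_comm s G.q, hqsD]
        exact Aux.mul_mem_nM hn₁mem hn1pos.ne' hS₂0 _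
      have hordqs : B + b + 1 ≤ ordS G.S₂ (s + G.q) :=
        Aux.le_ordS (by omega) hmemD
      -- v is in the lS-defining set
      have hvL : ordS G.S₂ (s + G.q) - ordS G.S₂ G.q - ordS G.S₂ s ≤ lS G.S₂ G.q :=
        le_csSup hLbdd ⟨s, hsS₂, hords, rfl⟩
      -- conclude
      have hfin : B + 1 ≤ u := by
        have h5 : B + 1 + cs ≤ ordS G.S₂ (s + G.q) := by omega
        omega
      have he2 : (B + 1) * G.n₁ = B * G.n₁ + G.n₁ := by ring
      have hρlt : G.q % G.n₁ < G.n₁ := Nat.mod_lt _ hn1pos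
      have : (B + 1) * G.n₁ ≤ u * G.n₁ := Nat.mul_le_mul_right _ hfin
      omega
  -- p ≥ u * m₁
  have hpu : u * G.m₁ ≤ G.p :=
    Aux.nM_ge hS₁lb u G.p (Aux.mem_nM_ordS G.hp hp0)
  -- hence q m₁ ≤ p n₁
  have hkey : G.q * G.m₁ ≤ G.p * G.n₁ := by
    calc G.q * G.m₁ ≤ (u * G.n₁) * G.m₁ := Nat.mul_le_mul_right _ hqu
      _ = (u * G.m₁) * G.n₁ := by ring
      _ ≤ G.p * G.n₁ := Nat.mul_le_mul_right _ hpu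
  -- the multiplicity computation
  have hmem : G.q * G.m₁ ∈ G.S :=
    AddSubmonoid.subset_closure (Or.inl ⟨G.m₁, ⟨⟨0, G.hd⟩, rfl⟩, rfl⟩)
  have hne : G.q * G.m₁ ≠ 0 := Nat.mul_ne_zero hq0 hm1pos.ne'
  have hlb : ∀ x ∈ G.S, x ≠ 0 → G.q * G.m₁ ≤ x := by
    intro x hx
    refine (AddSubmonoid.closure_induction
      (motive := fun y _ => y = 0 ∨ G.q * G.m₁ ≤ y) ?_ (Or.inl rfl) ?_ hx : x = 0 ∨ G.q * G.m₁ ≤ x) |>.resolve_left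
    · rintro y (⟨z, ⟨i, rfl⟩, rfl⟩ | ⟨z, ⟨j, rfl⟩, rfl⟩)
      · exact Or.inr (Nat.mul_le_mul_left _ (hm1le i))
      · refine Or.inr ?_
        calc G.q * G.m₁ ≤ G.p * G.n₁ := hkey
          _ ≤ G.p * G.n j := Nat.mul_le_mul_left _ (hn1le j)
    · rintro y z _ _ (rfl | hy) (rfl | hz) <;> simp_all <;> omega
  refine le_antisymm (Nat.sInf_le ⟨hmem, hne⟩) ?_
  exact le_csInf ⟨_, hmem, hne⟩ (fun b hb => hlb b hb.1 hb.2)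
end
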